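/- Let 0<p<1 and q=1−p. In a random graph order on the positive integers ℕ with parameter p, for every k≥1 the probability that k is related to every element m<k (i.e., m ≺_ω k for all 1≤m<k) equals λ_{k−1}(q)=∏_{i=1}^{k−1}(1−q^i). -/

import Mathlib

open MeasureTheory ProbabilityTheory
open scoped ENNReal

/-- The index set of potential edges of a random graph order on `ℕ = {1, 2, 3, …}`:
pairs `(i, j)` with `1 ≤ i < j`. -/
abbrev GraphOrderEdge : Type := {ij : ℕ × ℕ // 1 ≤ ij.1 ∧ ij.1 < ij.2}

/-- The random graph order relation `≺_ω`: the transitive closure of the relation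
`{(i, j) : 1 ≤ i < j and ω(i, j) = 1}`. -/
def GraphOrderRel (ω : GraphOrderEdge → Bool) (a b : ℕ) : Prop :=
  Relation.TransGen (fun x y => ∃ h : 1 ≤ x ∧ x < y, ω ⟨(x, y), h⟩ = true) a b

/-- `μ` is the law of a random graph order on `ℕ = {1, 2, 3, …}` with parameter `p`:
a probability measure on edge configurations whose coordinates are independent
Bernoulli(`p`) random variables. -/
structure IsRandomGraphOrderMeasure (μ : Measure (GraphOrderEdge → Bool)) (p : ℝ)
    (hp : 0 < p ∧ p < 1) : Prop where
  isProb : IsProbabilityMeasure μ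
  indep : iIndepFun (fun e (ω : GraphOrderEdge → Bool) => ω e) μ
  bernoulli : ∀ e : GraphOrderEdge, μ.map (fun ω => ω e) =
    (PMF.bernoulli (Real.toNNReal p) (Real.toNNReal_le_one.mpr hp.2.le)).toMeasure

/-- Partial product of the Euler function: `λ_k(q) = ∏_{i=1}^k (1 - q^i)`, `λ_0(q) = 1`. -/
noncomputable def eulerLam (q : ℝ) (k : ℕ) : ℝ := ∏ i ∈ Finset.range k, (1 - q ^ (i + 1))

/-- The Euler function `κ(q) = ∏_{i=1}^∞ (1 - q^i)`. -/
noncomputable def eulerKappa (q : ℝ) : ℝ := ∏' i : ℕ, (1 - q ^ (i + 1))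

namespace RGOAux

/-- Edges with both endpoints at most `k`. -/
def edges (k : ℕ) : Finset GraphOrderEdge :=
  (Finset.range (k+1) ×ˢ Finset.range (k+1)).subtype fun ij => 1 ≤ ij.1 ∧ ij.1 < ij.2

lemma mem_edges {k : ℕ} (e : GraphOrderEdge) : e ∈ edges k ↔ e.1.2 ≤ k := by
  obtain ⟨⟨a, b⟩, ha, hab⟩ := e
  simp only [edges, Finset.mem_subtype, Finset.mem_product, Finset.mem_range]
  omega

/-- Row `j` of the edges up to `k`. -/
def rowS (j k : ℕ) : Finset GraphOrderEdge := (edges k).filter fun e => e.1.1 = j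

/-- Rows strictly after `j` of the edges up to `k`. -/
def rowT (j k : ℕ) : Finset GraphOrderEdge := (edges k).filter fun e => j < e.1.1

lemma mem_rowS {j k : ℕ} (e : GraphOrderEdge) : e ∈ rowS j k ↔ e.1.1 = j ∧ e.1.2 ≤ k := by
  simp [rowS, mem_edges, and_comm]

lemma mem_rowT {j k : ℕ} (e : GraphOrderEdge) : e ∈ rowT j k ↔ j < e.1.1 ∧ e.1.2 ≤ k := by
  simp [rowT, mem_edges, and_comm]

lemma disjoint_rowS_rowT (j k : ℕ) : Disjoint (rowS j k) (rowT j k) := by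
  rw [Finset.disjoint_left]
  intro e he he'
  rw [mem_rowS] at he; rw [mem_rowT] at he'
  omega

lemma card_rowS {j k : ℕ} (hj : 1 ≤ j) : (rowS j k).card = k - j := by
  rw [← Nat.card_Ioc j k]
  apply Finset.card_bij (fun e _ => e.1.2)
  · intro e he
    rw [mem_rowS] at he
    have := e.2
    rw [Finset.mem_Ioc]
    omega
  · intro e₁ h₁ e₂ h₂ h
    rw [mem_rowS] at h₁ h₂
    exact Subtype.ext (Prod.ext (h₁.1.trans h₂.1.symm) h)
  · intro m hm
    rw [Finset.mem_Ioc] at hm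
    exact ⟨⟨(j, m), hj, hm.1⟩, (mem_rowS _).2 ⟨rfl, hm.2⟩, rfl⟩

/-- Row `i` contains an edge reaching at most `k`. -/
def rowHit (ω : GraphOrderEdge → Bool) (k i : ℕ) : Prop :=
  ∃ m, ∃ h : 1 ≤ i ∧ i < m, m ≤ k ∧ ω ⟨(i, m), h⟩ = true

/-- The event that every row `i` with `j ≤ i < k` hits. -/
def Eset (j k : ℕ) : Set (GraphOrderEdge → Bool) :=
  {ω | ∀ i, j ≤ i → i < k → rowHit ω k i}

/-- The event that row `j` hits. -/
def Bset (j k : ℕ) : Set (GraphOrderEdge → Bool) := {ω | rowHit ω k j}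

lemma le_of_rtg {ω : GraphOrderEdge → Bool} {a b : ℕ}
    (h : Relation.ReflTransGen (fun x y => ∃ h : 1 ≤ x ∧ x < y, ω ⟨(x, y), h⟩ = true) a b) :
    a ≤ b := by
  induction h with
  | refl => exact le_rfl
  | tail _ h' ih => obtain ⟨hh, _⟩ := h'; omega

/-- Deterministic description of the target event. -/
lemma event_eq (k : ℕ) :
    {ω : GraphOrderEdge → Bool | ∀ m : ℕ, 1 ≤ m → m < k → GraphOrderRel ω m k} = Eset 1 k := by
  ext ω
  constructor
  · intro h i hi hik
    obtain ⟨c, ⟨hh, htrue⟩, hck⟩ := Relation.TransGen.head'_iff.mp (h i hi hik)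
    exact ⟨c, hh, le_of_rtg hck, htrue⟩
  · intro h m hm hmk
    -- downward strong induction on k - m
    suffices H : ∀ n m, k - m ≤ n → 1 ≤ m → m < k → GraphOrderRel ω m k from
      H (k - m) m le_rfl hm hmk
    intro n
    induction n with
    | zero => intro m h1 h2 h3; omega
    | succ n ih =>
      intro m h1 h2 h3
      obtain ⟨m', hh, hm'k, htrue⟩ := h m h2 h3
      rcases eq_or_lt_of_le hm'k with rfl | hlt
      · exact Relation.TransGen.single ⟨hh, htrue⟩
      · exact Relation.TransGen.head ⟨hh, htrue⟩ (ih m' (by omega) (by omega) hlt)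

variable {p q : ℝ} (hp : 0 < p ∧ p < 1) (hq : q = 1 - p)
  {μ : Measure (GraphOrderEdge → Bool)} (hμ : IsRandomGraphOrderMeasure μ p hp)

include hp hq hμ

lemma meas_coord_false (e : GraphOrderEdge) :
    μ ((fun ω => ω e) ⁻¹' {false}) = ENNReal.ofReal q := by
  rw [← Measure.map_apply (measurable_pi_apply e) (measurableSet_singleton false),
    hμ.bernoulli e, PMF.toMeasure_apply_singleton _ _ (measurableSet_singleton _)]
  simp only [PMF.bernoulli, PMF.ofFintype_apply, cond_false]
  rw [hq, ENNReal.ofReal_sub _ hp.1.le, ENNReal.ofReal_one, ENNReal.ofReal]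

lemma meas_allFalse {j k : ℕ} (hj : 1 ≤ j) :
    μ (⋂ e ∈ rowS j k, (fun ω : GraphOrderEdge → Bool => ω e) ⁻¹' {false}) =
      ENNReal.ofReal (q ^ (k - j)) := by
  have h := hμ.indep.measure_inter_preimage_eq_mul (rowS j k)
    (sets := fun _ => ({false} : Set Bool)) (fun i _ => measurableSet_singleton _)
  rw [h, Finset.prod_congr rfl (fun e _ => meas_coord_false hp hq hμ e),
    Finset.prod_const, card_rowS hj, ← ENNReal.ofReal_pow (by rw [hq]; linarith [hp.2])]

omit hp hq hμ in
lemma Bset_compl_eq (j k : ℕ) (hj : 1 ≤ j) :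
    (Bset j k)ᶜ = ⋂ e ∈ rowS j k, (fun ω : GraphOrderEdge → Bool => ω e) ⁻¹' {false} := by
  ext ω
  simp only [Bset, rowHit, Set.mem_compl_iff, Set.mem_setOf_eq, not_exists, not_and,
    Set.mem_iInter, Set.mem_preimage, Set.mem_singleton_iff]
  constructor
  · intro h e he
    rw [mem_rowS] at he
    obtain ⟨⟨a, m⟩, hprop⟩ := e
    simp only at he
    obtain ⟨rfl, hmk⟩ := he
    have := h m hprop hmk
    simpa using this
  · intro h m hh hmk htrue
    have := h ⟨(j, m), hh⟩ ((mem_rowS _).2 ⟨rfl, hmk⟩)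
    rw [this] at htrue
    exact Bool.false_ne_true htrue

omit hp hq hμ in
lemma measurableSet_allFalse (j k : ℕ) :
    MeasurableSet (⋂ e ∈ rowS j k, (fun ω : GraphOrderEdge → Bool => ω e) ⁻¹' {false}) :=
  MeasurableSet.biInter (Finset.countable_toSet _)
    (fun e _ => (measurable_pi_apply e) (measurableSet_singleton _))

lemma meas_Bset {j k : ℕ} (hj : 1 ≤ j) :
    μ (Bset j k) = ENNReal.ofReal (1 - q ^ (k - j)) := by
  have hprob := hμ.isProb
  have hq0 : 0 ≤ q := by rw [hq]; linarith [hp.2]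
  have hq1 : q ≤ 1 := by rw [hq]; linarith [hp.1]
  have hc : μ ((Bset j k)ᶜ) = ENNReal.ofReal (q ^ (k - j)) := by
    rw [Bset_compl_eq j k hj]; exact meas_allFalse hp hq hμ hj
  have hBmeas : MeasurableSet ((Bset j k)ᶜ) := by
    rw [Bset_compl_eq j k hj]; exact measurableSet_allFalse j k
  have := measure_compl hBmeas (measure_ne_top μ _)
  rw [compl_compl, measure_univ, hc] at this
  rw [this, ENNReal.ofReal_sub _ (pow_nonneg hq0 _), ENNReal.ofReal_one,
    ENNReal.ofReal_pow hq0]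

omit hp hq hμ in
lemma Bset_eq_preimage {j k : ℕ} (hj : 1 ≤ j) :
    Bset j k = (fun ω (e : ↥(rowS j k)) => ω (e : GraphOrderEdge)) ⁻¹'
      {v | ∃ e : ↥(rowS j k), v e = true} := by
  ext ω
  simp only [Bset, rowHit, Set.mem_setOf_eq, Set.mem_preimage]
  constructor
  · rintro ⟨m, hh, hmk, htrue⟩
    exact ⟨⟨⟨(j, m), hh⟩, (mem_rowS _).2 ⟨rfl, hmk⟩⟩, htrue⟩
  · rintro ⟨⟨e, he⟩, htrue⟩
    rw [mem_rowS] at he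
    refine ⟨e.1.2, ⟨hj, ?_⟩, he.2, ?_⟩
    · have := e.2; omega
    · have heq : (⟨(j, e.1.2), ⟨hj, by have := e.2; omega⟩⟩ : GraphOrderEdge) = e :=
        Subtype.ext (Prod.ext he.1.symm rfl)
      rw [heq]; exact htrue

omit hp hq hμ in
lemma Eset_eq_preimage {j k : ℕ} (hj : 1 ≤ j) :
    Eset (j+1) k = (fun ω (e : ↥(rowT j k)) => ω (e : GraphOrderEdge)) ⁻¹'
      {v | ∀ i, j + 1 ≤ i → i < k →
        ∃ e : ↥(rowT j k), (e : GraphOrderEdge).1.1 = i ∧ v e = true} := by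
  ext ω
  simp only [Eset, rowHit, Set.mem_setOf_eq, Set.mem_preimage]
  constructor
  · intro h i hi hik
    obtain ⟨m, hh, hmk, htrue⟩ := h i hi hik
    exact ⟨⟨⟨(i, m), hh⟩, (mem_rowT _).2 ⟨by show j < i; omega, hmk⟩⟩, rfl, htrue⟩
  · intro h i hi hik
    obtain ⟨⟨e, he⟩, hfst, htrue⟩ := h i hi hik
    rw [mem_rowT] at he
    simp only at hfst
    have he2 := e.2
    refine ⟨e.1.2, ⟨by omega, by omega⟩, he.2, ?_⟩
    have heq : (⟨(i, e.1.2), ⟨by omega, by omega⟩⟩ : GraphOrderEdge) = e :=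
      Subtype.ext (Prod.ext hfst.symm rfl)
    rw [heq]; exact htrue

omit hp hq hμ in
lemma Eset_inter {j k : ℕ} (hjk : j < k) :
    Eset j k = Bset j k ∩ Eset (j+1) k := by
  ext ω
  simp only [Eset, Bset, Set.mem_setOf_eq, Set.mem_inter_iff]
  constructor
  · exact fun h => ⟨h j le_rfl hjk, fun i hi hik => h i (by omega) hik⟩
  · rintro ⟨hB, hE⟩ i hi hik
    rcases eq_or_lt_of_le hi with rfl | hlt
    · exact hB
    · exact hE i hlt hik

lemma meas_Eset {k : ℕ} : ∀ n j, 1 ≤ j → k - j ≤ n →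
    μ (Eset j k) = ENNReal.ofReal (∏ t ∈ Finset.range (k - j), (1 - q ^ (t + 1))) := by
  have hprob := hμ.isProb
  have hq0 : 0 ≤ q := by rw [hq]; linarith [hp.2]
  have hq1 : q ≤ 1 := by rw [hq]; linarith [hp.1]
  intro n
  induction n with
  | zero =>
    intro j hj hn
    have hkj : k - j = 0 := by omega
    have : Eset j k = Set.univ := by
      ext ω; simp only [Eset, Set.mem_setOf_eq, Set.mem_univ, iff_true]
      intro i hi hik; omega
    rw [this, hkj, measure_univ]
    simp
  | succ n ih =>
    intro j hj hn
    rcases le_or_gt k j with hkj | hjk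
    · have hkj0 : k - j = 0 := by omega
      have : Eset j k = Set.univ := by
        ext ω; simp only [Eset, Set.mem_setOf_eq, Set.mem_univ, iff_true]
        intro i hi hik; omega
      rw [this, hkj0, measure_univ]; simp
    · -- independence step
      have hindep := hμ.indep.indepFun_finset (rowS j k) (rowT j k)
        (disjoint_rowS_rowT j k) (fun e => measurable_pi_apply e)
      have hmeasS : MeasurableSet {v : ↥(rowS j k) → Bool | ∃ e : ↥(rowS j k), v e = true} :=
        (Set.toFinite _).measurableSet
      have hmeasT : MeasurableSet {v : ↥(rowT j k) → Bool | ∀ i, j + 1 ≤ i → i < k →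
          ∃ e : ↥(rowT j k), (e : GraphOrderEdge).1.1 = i ∧ v e = true} :=
        (Set.toFinite _).measurableSet
      have hmul := hindep.measure_inter_preimage_eq_mul _ _ hmeasS hmeasT
      have hstep : μ (Eset j k) = μ (Bset j k) * μ (Eset (j+1) k) := by
        rw [Eset_inter hjk, Bset_eq_preimage hj, Eset_eq_preimage hj]
        exact hmul
      have hIH := ih (j+1) (by omega) (by omega)
      rw [hstep, hIH, meas_Bset hp hq hμ hj, ← ENNReal.ofReal_mul
        (by have := pow_le_one₀ hq0 hq1 (n := k - j); linarith)]
      congr 1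
      have h1 : k - j = (k - (j+1)) + 1 := by omega
      rw [h1, Finset.prod_range_succ]
      exact mul_comm _ _

end RGOAux

/-- In a random graph order on `ℕ = {1, 2, …}` with parameter `0 < p < 1` and `q = 1 - p`,
for every `k ≥ 1` the probability that `k` is related to every element `m < k`
(i.e. `m ≺_ω k` for all `1 ≤ m < k`) equals `λ_{k-1}(q) = ∏_{i=1}^{k-1} (1 - q^i)`. -/
theorem prob_rel_all_below_eq (p q : ℝ) (hp : 0 < p ∧ p < 1) (hq : q = 1 - p)
    (μ : Measure (GraphOrderEdge → Bool)) (hμ : IsRandomGraphOrderMeasure μ p hp)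
    (k : ℕ) (hk : 1 ≤ k) :
    μ {ω | ∀ m : ℕ, 1 ≤ m → m < k → GraphOrderRel ω m k} =
      ENNReal.ofReal (eulerLam q (k - 1)) := by
  rw [RGOAux.event_eq k, RGOAux.meas_Eset hp hq hμ (k - 1) 1 le_rfl le_rfl]
  rfl
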